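/- For any constants Q > 0 and T > 0, the function g(ρ) = (2^{Q/((1-ρ)T)} - 1)·(1-ρ) is strictly increasing on the interval [0, 1); in particular, g attains its minimum over [0,1) uniquely at ρ = 0. -/

import Mathlib

open Real Set

lemma exp_slope_mono {a b : ℝ} (ha : 0 < a) (hab : a < b) :
    (Real.exp a - 1) / a < (Real.exp b - 1) / b := by
  have := strictConvexOn_exp.secant_strict_mono (a := 0) (x := a) (y := b)
    (Set.mem_univ _) (Set.mem_univ _) (Set.mem_univ _) ha.ne' (ha.trans hab).ne' hab
  simpa using this

lemma two_rpow_slope_mono {x y : ℝ} (hx : 0 < x) (hxy : x < y) :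
    ((2 : ℝ) ^ x - 1) / x < ((2 : ℝ) ^ y - 1) / y := by
  have hl2 : 0 < Real.log 2 := Real.log_pos one_lt_two
  have key := exp_slope_mono (mul_pos hl2 hx) (mul_lt_mul_of_pos_left hxy hl2)
  have h2x : (2 : ℝ) ^ x = Real.exp (Real.log 2 * x) := Real.rpow_def_of_pos two_pos x
  have h2y : (2 : ℝ) ^ y = Real.exp (Real.log 2 * y) := Real.rpow_def_of_pos two_pos y
  rw [h2x, h2y]
  have hy := hx.trans hxy
  rw [div_lt_div_iff₀ (by positivity) (by positivity)] at key
  rw [div_lt_div_iff₀ hx hy]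
  nlinarith

/-- For any constants `Q > 0` and `T > 0`, the threshold function
`g(ρ) = (2^{Q/((1-ρ)T)} - 1)·(1-ρ)` of the ideal-system (η = 1, P_c = 0)
save-then-transmit protocol is strictly increasing on `[0, 1)`; in particular,
`g` attains its minimum over `[0, 1)` uniquely at `ρ = 0`. -/
theorem ideal_threshold_strictMonoOn_and_min_at_zero (Q T : ℝ) (hQ : 0 < Q) (hT : 0 < T) :
    StrictMonoOn (fun ρ : ℝ => ((2 : ℝ) ^ (Q / ((1 - ρ) * T)) - 1) * (1 - ρ))
      (Set.Ico (0 : ℝ) 1) ∧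
    ∀ ρ ∈ Set.Ico (0 : ℝ) 1, ρ ≠ 0 →
      ((2 : ℝ) ^ (Q / ((1 - (0 : ℝ)) * T)) - 1) * (1 - (0 : ℝ)) <
        ((2 : ℝ) ^ (Q / ((1 - ρ) * T)) - 1) * (1 - ρ) := by
  have mono : StrictMonoOn (fun ρ : ℝ => ((2 : ℝ) ^ (Q / ((1 - ρ) * T)) - 1) * (1 - ρ))
      (Set.Ico (0 : ℝ) 1) := by
    intro ρ₁ h₁ ρ₂ h₂ hlt
    simp only
    set s₁ := 1 - ρ₁ with hs₁
    set s₂ := 1 - ρ₂ with hs₂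
    have hs₂pos : 0 < s₂ := by simp [hs₂]; linarith [h₂.2]
    have hs₁pos : 0 < s₁ := by simp [hs₁]; linarith [h₁.2]
    have hss : s₂ < s₁ := by simp [hs₁, hs₂]; linarith
    set x := Q / (s₁ * T) with hx
    set y := Q / (s₂ * T) with hy
    have hxpos : 0 < x := by positivity
    have hxy : x < y := by
      rw [hx, hy]
      apply div_lt_div_of_pos_left hQ (by positivity)
      exact mul_lt_mul_of_pos_right hss hT
    have key := two_rpow_slope_mono hxpos hxy
    have hxs : x * (s₁ * T) = Q := div_mul_cancel₀ Q (by positivity)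
    have hys : y * (s₂ * T) = Q := div_mul_cancel₀ Q (by positivity)
    rw [div_lt_div_iff₀ hxpos (hxpos.trans hxy)] at key
    have h2x : (1:ℝ) < (2:ℝ) ^ x := Real.one_lt_rpow_iff_of_pos two_pos |>.2 (Or.inl ⟨one_lt_two, hxpos⟩)
    have h2y : (1:ℝ) < (2:ℝ) ^ y := Real.one_lt_rpow_iff_of_pos two_pos |>.2 (Or.inl ⟨one_lt_two, hxpos.trans hxy⟩)
    have hkey2 := mul_lt_mul_of_pos_right key (mul_pos (mul_pos hs₁pos hs₂pos) hT)
    have e1 : ((2:ℝ) ^ x - 1) * y * (s₁ * s₂ * T) = ((2:ℝ) ^ x - 1) * s₁ * Q := by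
      rw [← hys]; ring
    have e2 : ((2:ℝ) ^ y - 1) * x * (s₁ * s₂ * T) = ((2:ℝ) ^ y - 1) * s₂ * Q := by
      rw [← hxs]; ring
    rw [e1, e2] at hkey2
    exact lt_of_mul_lt_mul_right hkey2 hQ.le
  refine ⟨mono, fun ρ hρ hne => ?_⟩
  exact mono (by simp) hρ (lt_of_le_of_ne hρ.1 (Ne.symm hne))
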